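/- A stationary CTMC with state space S and generator Q is time reversible (i.e., satisfies detailed balance π(s)q_{s,s′} = π(s′)q_{s′,s} for all s ≠ s′) if and only if Kolmogorov's criterion holds: for all n ≥ 2 and all distinct states s₁,…,sₙ, q_{s₁,s₂}·…·q_{s_{n-1},sₙ}·q_{sₙ,s₁} = q_{s₁,sₙ}·q_{sₙ,s_{n-1}}·…·q_{s₂,s₁}. -/

import Mathlib

namespace KolmoAux
variable {S : Type} [DecidableEq S]

def wprod (Q : S → S → ℝ) : List S → ℝ
  | [] => 1
  | [_] => 1
  | a :: b :: l => Q a b * wprod Q (b :: l)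

lemma wprod_cons_cons (Q : S → S → ℝ) (a b : S) (l : List S) :
    wprod Q (a :: b :: l) = Q a b * wprod Q (b :: l) := rfl

lemma wprod_append (Q : S → S → ℝ) (u : List S) (x : S) (v : List S) :
    wprod Q (u ++ x :: v) = wprod Q (u ++ [x]) * wprod Q (x :: v) := by
  induction u with
  | nil => simp [wprod]
  | cons a u ih =>
    cases u with
    | nil => simp [wprod_cons_cons, wprod]
    | cons b u' =>
      simp only [List.cons_append, wprod_cons_cons] at *
      rw [ih]; ring

lemma exists_dup : ∀ {l : List S}, ¬ l.Nodup →
    ∃ (x : S) (c₁ c₂ c₃ : List S), l = c₁ ++ x :: (c₂ ++ x :: c₃) := by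
  intro l h
  induction l with
  | nil => simp at h
  | cons a l ih =>
    by_cases ha : a ∈ l
    · obtain ⟨c₂, c₃, rfl⟩ := List.append_of_mem ha
      exact ⟨a, [], c₂, c₃, by simp⟩
    · have hl : ¬ l.Nodup := fun hn => h (List.nodup_cons.mpr ⟨ha, hn⟩)
      obtain ⟨x, c₁, c₂, c₃, rfl⟩ := ih hl
      exact ⟨x, a :: c₁, c₂, c₃, by simp⟩

lemma wprod_ofFn_concat (Q : S → S → ℝ) :
    ∀ (m : ℕ) (f : Fin (m + 1) → S) (x : S),
    wprod Q (List.ofFn f ++ [x]) =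
      (∏ i : Fin m, Q (f i.castSucc) (f i.succ)) * Q (f (Fin.last m)) x := by
  intro m
  induction m with
  | zero =>
    intro f x
    simp [List.ofFn_succ, wprod_cons_cons, wprod]
  | succ m ih =>
    intro f x
    have e : List.ofFn f ++ [x]
        = f 0 :: (List.ofFn (fun i : Fin (m + 1) => f i.succ) ++ [x]) := by
      rw [List.ofFn_succ]; rfl
    have e2 : List.ofFn (fun i : Fin (m + 1) => f i.succ) ++ [x]
        = f (Fin.succ 0) :: (List.ofFn (fun i : Fin m => f i.succ.succ) ++ [x]) := by
      rw [List.ofFn_succ]; rfl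
    rw [e, e2, wprod_cons_cons, ← e2, ih (fun i => f i.succ) x]
    rw [Fin.prod_univ_succ (f := fun i : Fin (m + 1) => Q (f i.castSucc) (f i.succ))]
    simp only [Fin.castSucc_zero, Fin.succ_last, Fin.succ_castSucc]
    ring

lemma wprod_cycle (Q : S → S → ℝ) (m : ℕ) (f : Fin (m + 1) → S) :
    wprod Q (List.ofFn f ++ [f 0]) = ∏ i : Fin (m + 1), Q (f i) (f (i + 1)) := by
  rw [wprod_ofFn_concat, Fin.prod_univ_castSucc (f := fun i : Fin (m+1) => Q (f i) (f (i + 1)))]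
  congr 1
  · exact Finset.prod_congr rfl fun i _ => by rw [Fin.coeSucc_eq_succ]
  · rw [Fin.last_add_one]

lemma closed_eq (Q : S → S → ℝ)
    (hK : ∀ (n : ℕ) (f : Fin (n + 2) → S), Function.Injective f →
      ∏ i : Fin (n + 2), Q (f i) (f (i + 1)) = ∏ i : Fin (n + 2), Q (f (i + 1)) (f i)) :
    ∀ (ns : List S) (a : S), ns.head? = some a → ns.getLast? = some a →
      wprod Q ns = wprod (flip Q) ns := by
  suffices H : ∀ (n : ℕ) (ns : List S), ns.length = n → ∀ a : S,
      ns.head? = some a → ns.getLast? = some a → wprod Q ns = wprod (flip Q) ns by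
    exact fun ns a h1 h2 => H ns.length ns rfl a h1 h2
  intro n
  induction n using Nat.strong_induction_on with
  | _ n IH =>
  intro ns hn a hhead hlast
  match ns, hn, hhead, hlast with
  | [], _, hhead, _ => simp at hhead
  | [b], _, _, _ => rfl
  | b :: c :: t, hn, hhead, hlast =>
    have hb : b = a := by simpa using hhead
    subst hb
    obtain ⟨d, hdl⟩ : ∃ d, b :: c :: t = d ++ [b] := by
      refine ⟨(b :: c :: t).dropLast, ?_⟩
      have h1 := List.dropLast_append_getLast (l := b :: c :: t) (by simp)
      have h2 : (b :: c :: t).getLast (by simp) = b := by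
        rw [List.getLast_eq_iff_getLast?_eq_some]; exact hlast
      rw [h2] at h1; exact h1.symm
    by_cases hnd : d.Nodup
    · -- simple cycle case
      match d, hnd, hdl with
      | [], _, hdl => simp at hdl
      | [e], _, hdl =>
        have he : b = e := by simpa using congrArg List.head? hdl
        rw [hdl, ← he]
        simp [wprod_cons_cons, wprod, Function.flip_def]
      | e :: e' :: d', hnd, hdl =>
        have he : b = e := by simpa using congrArg List.head? hdl
        set c' : List S := e :: e' :: d' with hc'
        have hlen : c'.length = d'.length + 2 := by simp [hc']
        set f : Fin (d'.length + 2) → S := fun i => c'.get (Fin.cast hlen.symm i) with hf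
        have hof : List.ofFn f = c' := by
          apply List.ext_getElem
          · simp [hlen]
          · intro i h1 h2
            simp only [List.getElem_ofFn]
            rfl
        have hinj : Function.Injective f := by
          intro i j hij
          simp only [hf] at hij
          have := (List.nodup_iff_injective_get.mp hnd) hij
          simpa [Fin.ext_iff] using this
        have hf0 : f 0 = e := by simp [hf, hc']
        have key := hK d'.length f hinj
        have e1 := wprod_cycle Q (d'.length + 1) f
        have e2 := wprod_cycle (flip Q) (d'.length + 1) f
        rw [hdl]
        have hns : c' ++ [b] = List.ofFn f ++ [f 0] := by rw [hof, hf0, ← he]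
        rw [hns, e1, e2, key]
        exact Finset.prod_congr rfl fun i _ => rfl
    · -- duplicate case : split
      obtain ⟨x, c₁, c₂, c₃, hsplit⟩ := exists_dup hnd
      have hns2 : (b :: c :: t) = c₁ ++ x :: (c₂ ++ x :: (c₃ ++ [b])) := by
        rw [hdl, hsplit]; simp
      have hlength : n = c₁.length + c₂.length + c₃.length + 3 := by
        rw [← hn, hns2]; simp; omega
      have hlen1 : (c₁ ++ x :: (c₃ ++ [b])).length < n := by
        simp [hlength]; omega
      have hlen2 : (x :: (c₂ ++ [x])).length < n := by
        simp [hlength]; omega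
      have houter_head : (c₁ ++ x :: (c₃ ++ [b])).head? = some b := by
        cases c₁ with
        | nil =>
          have : (b :: c :: t).head? = some x := by rw [hns2]; simp
          have hbx : b = x := by simpa using this
          simp [← hbx]
        | cons g c₁' =>
          have : (b :: c :: t).head? = some g := by rw [hns2]; simp
          have hbg : b = g := by simpa using this
          simp [← hbg]
      have houter_last : (c₁ ++ x :: (c₃ ++ [b])).getLast? = some b := by
        rw [show c₁ ++ x :: (c₃ ++ [b]) = (c₁ ++ x :: c₃) ++ [b] by simp, List.getLast?_concat]
      have hinner_last : (x :: (c₂ ++ [x])).getLast? = some x := by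
        rw [show x :: (c₂ ++ [x]) = (x :: c₂) ++ [x] from rfl, List.getLast?_concat]
      have IH1 := IH _ hlen1 _ rfl b houter_head houter_last
      have IH2 := IH _ hlen2 _ rfl x rfl hinner_last
      have split : ∀ (P : S → S → ℝ), wprod P (b :: c :: t)
          = wprod P (c₁ ++ [x]) * wprod P (x :: (c₂ ++ [x])) * wprod P (x :: (c₃ ++ [b])) := by
        intro P
        rw [hns2, wprod_append P c₁ x]
        rw [show x :: (c₂ ++ x :: (c₃ ++ [b])) = (x :: c₂) ++ x :: (c₃ ++ [b]) from rfl,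
          wprod_append P (x :: c₂) x]
        have : (x :: c₂) ++ [x] = x :: (c₂ ++ [x]) := rfl
        rw [this]; ring
      have houter : ∀ (P : S → S → ℝ), wprod P (c₁ ++ x :: (c₃ ++ [b]))
          = wprod P (c₁ ++ [x]) * wprod P (x :: (c₃ ++ [b])) := fun P => wprod_append P c₁ x _
      rw [houter Q, houter (flip Q)] at IH1
      rw [split Q, split (flip Q), IH2]
      linear_combination (wprod (flip Q) (x :: (c₂ ++ [x]))) * IH1

lemma wprod_concat (Q : S → S → ℝ) (u : List S) (hu : u ≠ []) (x : S) :
    wprod Q (u ++ [x]) = wprod Q u * Q (u.getLast hu) x := by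
  induction u with
  | nil => simp at hu
  | cons a u ih =>
    cases u with
    | nil => simp [wprod_cons_cons, wprod]
    | cons b u' =>
      simp only [List.cons_append, wprod_cons_cons] at *
      rw [ih (by simp)]
      rw [show (a :: b :: u').getLast hu = (b :: u').getLast (by simp) from
        List.getLast_cons _]
      ring

lemma wprod_reverse (Q : S → S → ℝ) (l : List S) :
    wprod Q l.reverse = wprod (flip Q) l := by
  induction l with
  | nil => simp [wprod]
  | cons a l ih =>
    cases l with
    | nil => simp [wprod]
    | cons b l' =>
      rw [wprod_cons_cons]
      have hne : (b :: l').reverse ≠ [] := by simp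
      rw [List.reverse_cons, wprod_concat Q _ hne, ih, List.getLast_reverse]
      simp only [List.head_cons, Function.flip_def]
      ring

lemma wprod_pos {P : S → S → ℝ} : ∀ (l : List S) (a : S),
    List.Chain (fun x y => 0 < P x y) a l → 0 < wprod P (a :: l)
  | [], _, _ => one_pos
  | b :: l, a, h => by
    rw [List.Chain, List.isChain_cons_cons] at h
    rw [wprod_cons_cons]
    exact mul_pos h.1 (wprod_pos l b h.2)

end KolmoAux

open KolmoAux in
/-- Kolmogorov's criterion: a stationary ergodic finite-state CTMC with
generator `Q` (nonnegative off-diagonal entries, rows summing to zero,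
irreducible) and stationary distribution `π` (positive, normalized,
satisfying global balance) is time reversible — i.e., satisfies detailed
balance `π(s)·q_{s,s'} = π(s')·q_{s',s}` for all `s ≠ s'` — if and only if
for all `n ≥ 2` and all distinct states `s₁, …, sₙ` the product of the rates
around the cycle equals the product of the rates around the reversed cycle
(cyclic successor on `Fin (n+2)`, so that `n + 2 ≥ 2` ranges over all cycle
lengths at least 2). -/
theorem kolmogorov_criterion
    {S : Type} [Fintype S] [DecidableEq S] (Q : S → S → ℝ) (π : S → ℝ)
    (hoff : ∀ s s' : S, s ≠ s' → 0 ≤ Q s s')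
    (hdiag : ∀ s : S, Q s s = -∑ s' ∈ Finset.univ.erase s, Q s s')
    (hirr : ∀ s s' : S, Relation.ReflTransGen (fun x y => x ≠ y ∧ 0 < Q x y) s s')
    (hpos : ∀ s : S, 0 < π s)
    (hsum : ∑ s : S, π s = 1)
    (hstat : ∀ s' : S, ∑ s : S, π s * Q s s' = 0) :
    (∀ s s' : S, s ≠ s' → π s * Q s s' = π s' * Q s' s) ↔
    (∀ (n : ℕ) (f : Fin (n + 2) → S), Function.Injective f →
      ∏ i : Fin (n + 2), Q (f i) (f (i + 1)) =
      ∏ i : Fin (n + 2), Q (f (i + 1)) (f i)) := by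
  constructor
  · -- detailed balance → Kolmogorov
    intro hdb n f hf
    have hne : ∀ i : Fin (n + 2), f i ≠ f (i + 1) := by
      intro i h
      have h1 : i = i + 1 := hf h
      have h2 : (0 : Fin (n + 2)) = 1 := by
        have := congrArg (fun j => j - i) h1
        simpa using this
      exact zero_ne_one h2
    have key : ∀ i : Fin (n + 2),
        π (f i) * Q (f i) (f (i + 1)) = π (f (i + 1)) * Q (f (i + 1)) (f i) :=
      fun i => hdb _ _ (hne i)
    have h1 : (∏ i : Fin (n + 2), π (f i)) * (∏ i : Fin (n + 2), Q (f i) (f (i + 1)))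
        = (∏ i : Fin (n + 2), π (f i)) * (∏ i : Fin (n + 2), Q (f (i + 1)) (f i)) := by
      calc (∏ i : Fin (n + 2), π (f i)) * (∏ i : Fin (n + 2), Q (f i) (f (i + 1)))
          = ∏ i : Fin (n + 2), (π (f i) * Q (f i) (f (i + 1))) :=
            Finset.prod_mul_distrib.symm
        _ = ∏ i : Fin (n + 2), (π (f (i + 1)) * Q (f (i + 1)) (f i)) :=
            Finset.prod_congr rfl fun i _ => key i
        _ = (∏ i : Fin (n + 2), π (f (i + 1))) * (∏ i : Fin (n + 2), Q (f (i + 1)) (f i)) :=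
            Finset.prod_mul_distrib
        _ = (∏ i : Fin (n + 2), π (f i)) * (∏ i : Fin (n + 2), Q (f (i + 1)) (f i)) := by
            rw [show (∏ i : Fin (n + 2), π (f (i + 1))) = ∏ i : Fin (n + 2), π (f i) from
              Equiv.prod_comp (Equiv.addRight (1 : Fin (n + 2))) (fun j => π (f j))]
    exact mul_left_cancel₀ (ne_of_gt (Finset.prod_pos fun i _ => hpos _)) h1
  · -- Kolmogorov → detailed balance
    intro hK
    have hSne : Nonempty S := by
      by_contra h
      rw [not_nonempty_iff] at h
      rw [Finset.univ_eq_empty, Finset.sum_empty] at hsum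
      norm_num at hsum
    obtain ⟨s₀⟩ := hSne
    -- positivity of reversed rates
    have hsym : ∀ u v : S, u ≠ v → 0 < Q u v → 0 < Q v u := by
      intro u v huv hQ
      obtain ⟨l, hl1, hl2⟩ := List.exists_isChain_cons_of_relationReflTransGen (hirr v u)
      have hchain : List.Chain (fun x y => 0 < Q x y) u (v :: l) :=
        List.Chain.cons hQ (hl1.imp fun _ _ h => h.2)
      have hlast : (u :: v :: l).getLast? = some u := by
        rw [List.getLast?_eq_getLast_of_ne_nil (by simp),
          List.getLast_cons (by simp), hl2]
      have hclosed := closed_eq Q hK (u :: v :: l) u rfl hlast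
      have hpos1 : 0 < wprod Q (u :: v :: l) := wprod_pos _ _ hchain
      rw [hclosed, wprod_cons_cons] at hpos1
      have hne0 : Q v u ≠ 0 := by
        intro h0
        rw [show flip Q u v = Q v u from rfl, h0, zero_mul] at hpos1
        exact lt_irrefl 0 hpos1
      exact lt_of_le_of_ne (hoff v u huv.symm) (Ne.symm hne0)
    -- choose paths from s₀ to each state
    have hpath : ∀ s : S, ∃ l : List S,
        List.Chain (fun x y => x ≠ y ∧ 0 < Q x y) s₀ l ∧
        (s₀ :: l).getLast (List.cons_ne_nil _ _) = s :=
      fun s => List.exists_isChain_cons_of_relationReflTransGen (hirr s₀ s)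
    choose p hp1 hp2 using hpath
    set F : S → ℝ := fun s => wprod Q (s₀ :: p s) with hF
    set B : S → ℝ := fun s => wprod (flip Q) (s₀ :: p s) with hB
    have hFpos : ∀ s, 0 < F s := fun s =>
      wprod_pos _ _ (List.IsChain.imp (fun _ _ h => h.2) (hp1 s))
    have hBpos : ∀ s, 0 < B s := fun s =>
      wprod_pos (P := flip Q) _ _ (List.IsChain.imp (fun a b h => hsym a b h.1 h.2) (hp1 s))
    -- the key cycle identity
    have hedge : ∀ u v : S, F u * Q u v * B v = B u * Q v u * F v := by
      intro u v
      have h2ne : (p v).reverse ++ [s₀] = (s₀ :: p v).reverse := by simp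
      have hvrev : (s₀ :: p v).reverse = v :: ((s₀ :: p v).dropLast).reverse := by
        conv_lhs => rw [← List.dropLast_append_getLast (l := s₀ :: p v) (by simp)]
        rw [List.reverse_append, hp2 v]
        rfl
      have hhead : ((s₀ :: p u) ++ (s₀ :: p v).reverse).head? = some s₀ := rfl
      have hlast : ((s₀ :: p u) ++ (s₀ :: p v).reverse).getLast? = some s₀ := by
        rw [← h2ne, show (s₀ :: p u) ++ ((p v).reverse ++ [s₀])
          = ((s₀ :: p u) ++ (p v).reverse) ++ [s₀] by simp, List.getLast?_concat]
      have hclosed := closed_eq Q hK _ s₀ hhead hlast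
      have hgl : (s₀ :: p u).getLast (by simp) = u := hp2 u
      have hQside : wprod Q ((s₀ :: p u) ++ (s₀ :: p v).reverse) = F u * Q u v * B v := by
        rw [hvrev, wprod_append Q (s₀ :: p u) v,
          wprod_concat Q (s₀ :: p u) (by simp) v, hgl, ← hvrev, wprod_reverse]
      have hflipside : wprod (flip Q) ((s₀ :: p u) ++ (s₀ :: p v).reverse)
          = B u * Q v u * F v := by
        rw [hvrev, wprod_append (flip Q) (s₀ :: p u) v,
          wprod_concat (flip Q) (s₀ :: p u) (by simp) v, hgl, ← hvrev, wprod_reverse]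
        rfl
      rw [← hQside, ← hflipside, hclosed]
    set w : S → ℝ := fun s => F s / B s with hw
    have hwpos : ∀ s, 0 < w s := fun s => div_pos (hFpos s) (hBpos s)
    have hwdb : ∀ u v : S, w u * Q u v = w v * Q v u := by
      intro u v
      have h := hedge u v
      have hbu := (hBpos u).ne'
      have hbv := (hBpos v).ne'
      rw [hw]
      field_simp
      linear_combination h
    have hwstat : ∀ v : S, ∑ u : S, w u * Q u v = 0 := by
      intro v
      rw [Finset.sum_congr rfl fun u _ => hwdb u v, ← Finset.mul_sum]
      have hrow : ∑ u : S, Q v u = 0 := by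
        rw [← Finset.add_sum_erase _ _ (Finset.mem_univ v), hdiag v]
        ring
      rw [hrow, mul_zero]
    obtain ⟨t, _, htmin⟩ := Finset.exists_min_image Finset.univ (fun s => π s / w s)
      ⟨s₀, Finset.mem_univ s₀⟩
    set cst : ℝ := π t / w t with hcst
    set v : S → ℝ := fun s => π s - cst * w s with hv
    have hv0 : v t = 0 := by
      simp only [hv, hcst]
      rw [div_mul_cancel₀ _ (hwpos t).ne']
      ring
    have hvnn : ∀ s, 0 ≤ v s := by
      intro s
      have := htmin s (Finset.mem_univ s)
      rw [le_div_iff₀ (hwpos s)] at this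
      simp only [hv]
      linarith
    have hvstat : ∀ v' : S, ∑ u : S, v u * Q u v' = 0 := by
      intro v'
      have : ∀ u : S, v u * Q u v' = π u * Q u v' - cst * (w u * Q u v') := by
        intro u; rw [hv]; ring
      rw [Finset.sum_congr rfl fun u _ => this u, Finset.sum_sub_distrib,
        ← Finset.mul_sum, hstat, hwstat, mul_zero, sub_zero]
    have hzero : ∀ s : S, v s = 0 := by
      intro s
      have hst := hirr s t
      induction hst using Relation.ReflTransGen.head_induction_on with
      | refl => exact hv0
      | head h _ ih =>
        rename_i x y _
        have hsum0 := hvstat y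
        rw [← Finset.add_sum_erase _ _ (Finset.mem_univ y), ih, zero_mul, zero_add] at hsum0
        have hterm := (Finset.sum_eq_zero_iff_of_nonneg ?_).mp hsum0 x
          (Finset.mem_erase.mpr ⟨h.1, Finset.mem_univ x⟩)
        · exact (mul_eq_zero.mp hterm).resolve_right (ne_of_gt h.2)
        · intro u hu
          exact mul_nonneg (hvnn u) (hoff u y (Finset.mem_erase.mp hu).1)
    have hπw : ∀ s : S, π s = cst * w s := by
      intro s
      have h0 := hzero s
      simp only [hv] at h0
      linarith
    intro s s' _
    rw [hπw s, hπw s', mul_assoc, mul_assoc, hwdb s s']
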